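/- arXiv:1910.11574 — 2 statements merged into one kernel-verified Lean document; each statement's English description precedes it below -/
import Mathlib

section
/- Let C be the differential convolutional code with codewords vanishing under the syndromes s_i = y[L(δ^i(α))], and let e = e_1 x^{k_1} + … + e_v x^{k_v} be the error with v ≤ τ = ⌊(d−1)/2⌋. Then for 0 ≤ i ≤ 2τ − 1, δ^i(α)·s_i = Σ_{j=1}^v e_j δ^{i+k_j}(α), and (e_1,…,e_v) is the unique solution of the first v of these equations. -/
open scoped BigOperators

/-- `N_k(a)`: `N_0(a) = 1`, `N_{k+1}(a) = N_k(a)·a + δ(N_k(a))`. -/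
def Nrec {F : Type*} [Field F] (δ : F → F) (a : F) : ℕ → F
  | 0 => 1
  | k + 1 => Nrec δ a k * a + δ (Nrec δ a k)

section Aux

variable {F : Type*} [Field F] (δ : F → F)

lemma delta_zero (hadd : ∀ a b : F, δ (a + b) = δ a + δ b) : δ 0 = 0 := by
  have h := hadd 0 0
  rw [add_zero] at h
  exact (left_eq_add.mp h)

lemma delta_one (hmul : ∀ a b : F, δ (a * b) = a * δ b + δ a * b) : δ 1 = 0 := by
  have h := hmul 1 1
  rw [mul_one, one_mul, mul_one] at h
  exact (left_eq_add.mp h)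

lemma delta_sum (hadd : ∀ a b : F, δ (a + b) = δ a + δ b)
    {ι : Type*} (t : Finset ι) (g : ι → F) :
    δ (∑ i ∈ t, g i) = ∑ i ∈ t, δ (g i) := by
  classical
  induction t using Finset.induction_on with
  | empty => simpa using delta_zero δ hadd
  | insert a t' h ih => rw [Finset.sum_insert h, hadd, ih, Finset.sum_insert h]

lemma wronskian_lemma (hadd : ∀ a b : F, δ (a + b) = δ a + δ b)
    (hmul : ∀ a b : F, δ (a * b) = a * δ b + δ a * b) :
    ∀ (v : ℕ) (u : Fin v → F),
      (∀ b : Fin v → F, (∀ j, δ (b j) = 0) → ∑ j, b j * u j = 0 → ∀ j, b j = 0) →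
      ∀ f : Fin v → F, (∀ i, i < v → ∑ j, f j * δ^[i] (u j) = 0) → ∀ j, f j = 0 := by
  intro v
  induction v with
  | zero => intro u hu f hf j; exact j.elim0
  | succ v ih =>
    intro u hu f hf
    by_contra hne
    push_neg at hne
    obtain ⟨j0, hj0⟩ := hne
    set σ : Equiv.Perm (Fin (v + 1)) := Equiv.swap j0 (Fin.last v) with hσ
    set u' : Fin (v + 1) → F := u ∘ σ with hu'def
    set f' : Fin (v + 1) → F := f ∘ σ with hf'def
    have hu' : ∀ b : Fin (v+1) → F, (∀ j, δ (b j) = 0) → ∑ j, b j * u' j = 0 →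
        ∀ j, b j = 0 := by
      intro b hb hsum j
      have h1 : ∑ m, (b ∘ σ.symm) m * u m = 0 := by
        rw [← Equiv.sum_comp σ (fun m => (b ∘ σ.symm) m * u m)]
        simpa [hu'def] using hsum
      have h2 := hu (b ∘ σ.symm) (fun m => hb _) h1 (σ j)
      simpa using h2
    have hf' : ∀ i, i < v + 1 → ∑ j, f' j * δ^[i] (u' j) = 0 := by
      intro i hi
      rw [← hf i hi, ← Equiv.sum_comp σ (fun m => f m * δ^[i] (u m))]
      rfl
    have hflast : f' (Fin.last v) ≠ 0 := by
      simpa [hf'def, hσ, Equiv.swap_apply_right] using hj0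
    set g : Fin (v + 1) → F := fun j => f' j * (f' (Fin.last v))⁻¹ with hgdef
    have hglast : g (Fin.last v) = 1 := mul_inv_cancel₀ hflast
    have hg : ∀ i, i < v + 1 → ∑ j, g j * δ^[i] (u' j) = 0 := by
      intro i hi
      have : ∑ j, g j * δ^[i] (u' j)
          = (f' (Fin.last v))⁻¹ * ∑ j, f' j * δ^[i] (u' j) := by
        rw [Finset.mul_sum]
        exact Finset.sum_congr rfl fun j _ => by rw [hgdef]; ring
      rw [this, hf' i hi, mul_zero]
    have hdg : ∀ i, i < v → ∑ j, δ (g j) * δ^[i] (u' j) = 0 := by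
      intro i hi
      have h1 : δ (∑ j, g j * δ^[i] (u' j)) = 0 := by
        rw [hg i (Nat.lt_succ_of_lt hi), delta_zero δ hadd]
      rw [delta_sum δ hadd] at h1
      have h2 : ∑ j, δ (g j * δ^[i] (u' j))
          = ∑ j, (g j * δ^[i+1] (u' j) + δ (g j) * δ^[i] (u' j)) := by
        refine Finset.sum_congr rfl fun j _ => ?_
        rw [hmul, Function.iterate_succ_apply']
      rw [h2, Finset.sum_add_distrib, hg (i+1) (Nat.succ_lt_succ hi), zero_add] at h1
      exact h1
    have hdglast : δ (g (Fin.last v)) = 0 := by rw [hglast]; exact delta_one δ hmul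
    have hu'' : ∀ b : Fin v → F, (∀ j, δ (b j) = 0) →
        ∑ j, b j * u' (Fin.castSucc j) = 0 → ∀ j, b j = 0 := by
      intro b hb hsum j
      set b' : Fin (v+1) → F := Fin.snoc b (0:F) with hb'def
      have hb' : ∀ m, δ (b' m) = 0 := by
        intro m
        refine Fin.lastCases ?_ ?_ m
        · rw [hb'def, Fin.snoc_last]; exact delta_zero δ hadd
        · intro m'; rw [hb'def, Fin.snoc_castSucc]; exact hb m'
      have hsum' : ∑ m, b' m * u' m = 0 := by
        rw [Fin.sum_univ_castSucc]
        simp only [hb'def, Fin.snoc_castSucc, Fin.snoc_last, zero_mul, add_zero]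
        exact hsum
      have := hu' b' hb' hsum' (Fin.castSucc j)
      simpa [hb'def] using this
    have hzero : ∀ j : Fin v, δ (g (Fin.castSucc j)) = 0 := by
      refine ih (fun j => u' (Fin.castSucc j)) hu''
        (fun j => δ (g (Fin.castSucc j))) ?_
      intro i hi
      have h1 := hdg i hi
      rw [Fin.sum_univ_castSucc, hdglast, zero_mul, add_zero] at h1
      exact h1
    have hallzero : ∀ j, δ (g j) = 0 := by
      intro j
      refine Fin.lastCases hdglast hzero j
    have hg0 : ∑ j, g j * u' j = 0 := by
      have := hg 0 (Nat.succ_pos v)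
      simpa using this
    have := hu' g hallzero hg0 (Fin.last v)
    rw [hglast] at this
    exact one_ne_zero this

lemma Nrec_key (hmul : ∀ a b : F, δ (a * b) = a * δ b + δ a * b)
    (a : F) (ha : a ≠ 0) : ∀ m : ℕ, a * Nrec δ (δ a / a) m = δ^[m] a := by
  intro m
  induction m with
  | zero => simp [Nrec]
  | succ m ih =>
    rw [Function.iterate_succ_apply', ← ih, hmul, Nrec]
    field_simp
    ring

end Aux

/-- Syndrome equations for an RS differential convolutional code of designed distance
`d`: if `y = c + e` with `c` in the code and error `e = e_1 x^{k_1} + … + e_v x^{k_v}`,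
`v ≤ τ = ⌊(d−1)/2⌋`, then `δ^i(α)·s_i = ∑_j e_j δ^{i+k_j}(α)` for `0 ≤ i ≤ 2τ−1`,
where `s_i = y[L(δ^i(α))]` is the `i`-th syndrome, and `(e_1, …, e_v)` is the unique
solution of the first `v` of these equations. -/
theorem syndrome_equations (Fq : Type*) [Field Fq] [Fintype Fq]
    (p : ℕ) [Fact p.Prime] [CharP Fq p]
    (δ : RatFunc Fq → RatFunc Fq)
    (hadd : ∀ a b : RatFunc Fq, δ (a + b) = δ a + δ b)
    (hmul : ∀ a b : RatFunc Fq, δ (a * b) = a * δ b + δ a * b)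
    (hδ : δ ≠ 0)
    (α : RatFunc Fq)
    (hli : ∀ a : Fin p → RatFunc Fq, (∀ i, δ (a i) = 0) →
      ∑ i, a i * δ^[(i : ℕ)] α = 0 → ∀ i, a i = 0)
    (hspan : ∀ f : RatFunc Fq, ∃ a : Fin p → RatFunc Fq,
      (∀ i, δ (a i) = 0) ∧ f = ∑ i, a i * δ^[(i : ℕ)] α)
    (d : ℕ) (hd1 : 1 ≤ d) (hdp : d ≤ p)
    (v : ℕ) (hv : v ≤ (d - 1) / 2)
    (k : Fin v → Fin p) (hk : Function.Injective k)
    (e : Fin v → RatFunc Fq) (he : ∀ j, e j ≠ 0)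
    -- `c` is a codeword: it is annihilated by right evaluation at `L(δ^i(α))`, `i ≤ d−2`
    (c : Fin p → RatFunc Fq)
    (hc : ∀ i : ℕ, i + 1 < d →
      ∑ m : Fin p, c m * Nrec δ (δ (δ^[i] α) / δ^[i] α) (m : ℕ) = 0)
    -- the received word `y = c + e`
    (y : Fin p → RatFunc Fq)
    (hy : ∀ m : Fin p, y m = c m + ∑ j, if k j = m then e j else 0)
    -- the syndromes `s_i = y[L(δ^i(α))]`
    (s : ℕ → RatFunc Fq)
    (hs : ∀ i : ℕ, s i = ∑ m : Fin p, y m * Nrec δ (δ (δ^[i] α) / δ^[i] α) (m : ℕ)) :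
    (∀ i : ℕ, i < 2 * ((d - 1) / 2) →
        δ^[i] α * s i = ∑ j, e j * δ^[i + (k j : ℕ)] α) ∧
    (∀ e' : Fin v → RatFunc Fq,
        (∀ i : ℕ, i < v → δ^[i] α * s i = ∑ j, e' j * δ^[i + (k j : ℕ)] α) →
        e' = e) := by

  classical
  have hd0 : δ 0 = 0 := delta_zero δ hadd
  have hd1' : δ (1 : RatFunc Fq) = 0 := delta_one δ hmul
  -- nonvanishing of δ^[i] α for i < p
  have hnz : ∀ i : ℕ, i < p → δ^[i] α ≠ 0 := by
    intro i hi h0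
    set a : Fin p → RatFunc Fq := fun m => if m = ⟨i, hi⟩ then 1 else 0 with hadef
    have h1 : ∀ m, δ (a m) = 0 := by
      intro m; rw [hadef]; dsimp only; split_ifs <;> simp [hd0, hd1']
    have h2 : ∑ m, a m * δ^[(m : ℕ)] α = 0 := by
      have e1 : ∑ m, a m * δ^[(m : ℕ)] α
          = ∑ m : Fin p, if m = ⟨i, hi⟩ then δ^[(m : ℕ)] α else 0 := by
        refine Finset.sum_congr rfl fun m _ => ?_
        rw [hadef]; dsimp only; split_ifs <;> simp
      rw [e1, Finset.sum_ite_eq' Finset.univ (⟨i, hi⟩ : Fin p)]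
      simpa using h0
    have := hli a h1 h2 ⟨i, hi⟩
    rw [hadef] at this; simp at this
  -- Part 1
  have part1 : ∀ i : ℕ, i < 2 * ((d - 1) / 2) →
      δ^[i] α * s i = ∑ j, e j * δ^[i + (k j : ℕ)] α := by
    intro i hi
    have hdd : (d - 1) / 2 * 2 ≤ d - 1 := Nat.div_mul_le_self (d - 1) 2
    have hid : i + 1 < d := by omega
    have hip : i < p := by omega
    have ha : δ^[i] α ≠ 0 := hnz i hip
    have hsi : s i = ∑ j, e j * Nrec δ (δ (δ^[i] α) / δ^[i] α) (k j : ℕ) := by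
      rw [hs i]
      have hsplit : ∀ m : Fin p,
          y m * Nrec δ (δ (δ^[i] α) / δ^[i] α) (m : ℕ)
            = c m * Nrec δ (δ (δ^[i] α) / δ^[i] α) (m : ℕ)
              + ∑ j, (if k j = m then e j * Nrec δ (δ (δ^[i] α) / δ^[i] α) (m : ℕ) else 0) := by
        intro m
        rw [hy m, add_mul, Finset.sum_mul]
        congr 1
        refine Finset.sum_congr rfl fun j _ => ?_
        split_ifs <;> simp
      rw [Finset.sum_congr rfl fun m _ => hsplit m, Finset.sum_add_distrib, hc i hid, zero_add,
        Finset.sum_comm]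
      refine Finset.sum_congr rfl fun j _ => ?_
      have : ∀ m : Fin p, (if k j = m then e j * Nrec δ (δ (δ^[i] α) / δ^[i] α) (m : ℕ) else 0)
          = if m = k j then e j * Nrec δ (δ (δ^[i] α) / δ^[i] α) (m : ℕ) else 0 := by
        intro m; simp [eq_comm]
      rw [Finset.sum_congr rfl fun m _ => this m,
        Finset.sum_ite_eq' Finset.univ (k j)]
      simp
    rw [hsi, Finset.mul_sum]
    refine Finset.sum_congr rfl fun j _ => ?_
    have hN := Nrec_key δ hmul (δ^[i] α) ha (k j : ℕ)
    have : δ^[i] α * (e j * Nrec δ (δ (δ^[i] α) / δ^[i] α) (k j : ℕ))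
        = e j * (δ^[i] α * Nrec δ (δ (δ^[i] α) / δ^[i] α) (k j : ℕ)) := by ring
    rw [this, hN, ← Function.iterate_add_apply, Nat.add_comm]
  refine ⟨part1, ?_⟩
  -- Part 2: uniqueness
  intro e' he'
  have hu : ∀ b : Fin v → RatFunc Fq, (∀ j, δ (b j) = 0) →
      ∑ j, b j * δ^[(k j : ℕ)] α = 0 → ∀ j, b j = 0 := by
    intro b hb hsum j
    set b' : Fin p → RatFunc Fq := fun m => ∑ j', if k j' = m then b j' else 0 with hb'def
    have h1 : ∀ m, δ (b' m) = 0 := by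
      intro m
      rw [hb'def]; dsimp only
      rw [delta_sum δ hadd]
      refine Finset.sum_eq_zero fun j' _ => ?_
      split_ifs <;> simp [hb, hd0]
    have h2 : ∑ m, b' m * δ^[(m : ℕ)] α = 0 := by
      have e1 : ∑ m, b' m * δ^[(m : ℕ)] α
          = ∑ m : Fin p, ∑ j', if m = k j' then b j' * δ^[(m : ℕ)] α else 0 := by
        refine Finset.sum_congr rfl fun m _ => ?_
        rw [hb'def]; dsimp only
        rw [Finset.sum_mul]
        refine Finset.sum_congr rfl fun j' _ => ?_
        by_cases h : k j' = m
        · simp [h]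
        · simp [h, Ne.symm h]
      have e2 : ∑ j', b j' * δ^[(k j' : ℕ)] α
          = ∑ j' : Fin v, ∑ m : Fin p, if m = k j' then b j' * δ^[(m : ℕ)] α else 0 := by
        refine Finset.sum_congr rfl fun j' _ => ?_
        rw [Finset.sum_ite_eq' Finset.univ (k j')]
        simp
      rw [e1, Finset.sum_comm, ← e2]
      exact hsum
    have h3 := hli b' h1 h2 (k j)
    rw [hb'def] at h3; dsimp only at h3
    have : ∀ j', (if k j' = k j then b j' else 0) = if j' = j then b j' else 0 := by
      intro j'; simp [hk.eq_iff]
    rw [Finset.sum_congr rfl fun j' _ => this j', Finset.sum_ite_eq' Finset.univ j] at h3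
    simpa using h3
  have hf : ∀ i, i < v → ∑ j, (e' j - e j) * δ^[i] (δ^[(k j : ℕ)] α) = 0 := by
    intro i hi
    have hiv : i < 2 * ((d - 1) / 2) := by omega
    have h1 := he' i hi
    have h2 := part1 i hiv
    have : ∑ j, (e' j - e j) * δ^[i] (δ^[(k j : ℕ)] α)
        = ∑ j, e' j * δ^[i + (k j : ℕ)] α - ∑ j, e j * δ^[i + (k j : ℕ)] α := by
      rw [← Finset.sum_sub_distrib]
      refine Finset.sum_congr rfl fun j _ => ?_
      rw [← Function.iterate_add_apply]
      ring
    rw [this, ← h1, ← h2, sub_self]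
  have := wronskian_lemma δ hadd hmul v (fun j => δ^[(k j : ℕ)] α) hu
    (fun j => e' j - e j) hf
  funext j
  have hj := this j
  exact sub_eq_zero.mp hj
end

section
/- With error positions k_1, …, k_v and error locator polynomial λ = [x − L(δ^{k_1}(α)), …, x − L(δ^{k_v}(α))]_ℓ, a position t ∈ {0,…,p−1} satisfies t ∈ {k_1,…,k_v} if and only if L(δ^t(α)) is a right root of λ. -/
open scoped BigOperators

/-- Coefficients of the product `f·g` in the differential operator ring `F[x;δ]`. -/
noncomputable def skewMul {F : Type*} [Field F] (δ : F → F) (f g : ℕ →₀ F) (n : ℕ) : F :=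
  ∑ i ∈ f.support, ∑ j ∈ g.support,
    if j ≤ n then f i * (Nat.choose i (n - j) : F) * δ^[i - (n - j)] (g j) else 0

/-- `f` is a right divisor of `g` in `F[x;δ]`: `g = q·f` for some `q`. -/
noncomputable def RDvd {F : Type*} [Field F] (δ : F → F) (f g : ℕ →₀ F) : Prop :=
  ∃ q : ℕ →₀ F, ∀ n : ℕ, g n = skewMul δ q f n

/-- `g` is monic of degree `m`. -/
def IsMonicOfDeg {F : Type*} [Field F] (g : ℕ →₀ F) (m : ℕ) : Prop :=
  g m = 1 ∧ ∀ n : ℕ, m < n → g n = 0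

section Basics
variable {F : Type*} [Field F] (δ : F → F)
variable (hadd : ∀ a b : F, δ (a + b) = δ a + δ b)
variable (hmul : ∀ a b : F, δ (a * b) = a * δ b + δ a * b)

include hadd in
theorem del_zero : δ 0 = 0 := by have := hadd 0 0; simp at this; exact this

include hmul in
theorem del_one : δ 1 = 0 := by
  have := hmul 1 1
  simp at this
  exact this

include hadd in
theorem del_neg (a : F) : δ (-a) = - δ a := by
  have := hadd a (-a)
  rw [add_neg_cancel, del_zero δ hadd] at this
  linear_combination -this

include hadd in
theorem del_sum {ι : Type*} (s : Finset ι) (f : ι → F) :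
    δ (∑ i ∈ s, f i) = ∑ i ∈ s, δ (f i) := by
  classical
  induction s using Finset.induction_on with
  | empty => simpa using del_zero δ hadd
  | insert a s' h ih => rw [Finset.sum_insert h, hadd, ih, Finset.sum_insert h]

include hadd hmul in
theorem del_nat (n : ℕ) : δ (n : F) = 0 := by
  induction n with
  | zero => simpa using del_zero δ hadd
  | succ m ih => push_cast; rw [hadd, ih, del_one δ hmul, add_zero]

include hadd in
theorem del_iter_zero (n : ℕ) : δ^[n] 0 = 0 := by
  induction n with
  | zero => rfl
  | succ m ih => rw [Function.iterate_succ_apply', ih, del_zero δ hadd]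

include hadd in
theorem del_iter_sum {ι : Type*} (n : ℕ) (s : Finset ι) (f : ι → F) :
    δ^[n] (∑ i ∈ s, f i) = ∑ i ∈ s, δ^[n] (f i) := by
  induction n generalizing f with
  | zero => rfl
  | succ m ih =>
      rw [Function.iterate_succ_apply, del_sum δ hadd]
      exact ih _

include hadd hmul in
theorem del_const_mul (c a : F) (hc : δ c = 0) : δ (c * a) = c * δ a := by
  rw [hmul, hc, zero_mul, add_zero]

include hmul in
theorem del_inv (a : F) (ha : a ≠ 0) : δ a⁻¹ = - δ a * a⁻¹ * a⁻¹ := by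
  have h1 : δ (a * a⁻¹) = 0 := by rw [mul_inv_cancel₀ ha, del_one δ hmul]
  rw [hmul] at h1
  calc δ a⁻¹ = a⁻¹ * (a * δ a⁻¹) := by field_simp
    _ = a⁻¹ * (-(δ a * a⁻¹)) := by rw [eq_neg_of_add_eq_zero_left h1]
    _ = - δ a * a⁻¹ * a⁻¹ := by ring

include hadd hmul in
/-- Iterated Leibniz rule. -/
theorem del_iter_mul (i : ℕ) (c u : F) :
    δ^[i] (c * u) = ∑ m ∈ Finset.range (i + 1),
      (Nat.choose i m : F) * δ^[i - m] c * δ^[m] u := by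
  induction i generalizing c u with
  | zero => simp
  | succ n ih =>
      rw [Function.iterate_succ_apply', ih, del_sum δ hadd]
      have key : ∀ m ∈ Finset.range (n+1),
          δ ((Nat.choose n m : F) * δ^[n - m] c * δ^[m] u)
          = (Nat.choose n m : F) * δ^[n + 1 - m] c * δ^[m] u
            + (Nat.choose n m : F) * δ^[n - m] c * δ^[m + 1] u := by
        intro m hm
        rw [Finset.mem_range] at hm
        have : n + 1 - m = (n - m) + 1 := by omega
        rw [this, mul_assoc, del_const_mul δ hadd hmul _ _ (del_nat δ hadd hmul _), hmul,
          Function.iterate_succ_apply', Function.iterate_succ_apply']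
        ring
      rw [Finset.sum_congr rfl key, Finset.sum_add_distrib]
      have hT : ∑ m ∈ Finset.range (n+1+1), (Nat.choose (n+1) m : F) * δ^[n+1-m] c * δ^[m] u
          = ((∑ m ∈ Finset.range (n+1), (Nat.choose n m : F) * δ^[n-m] c * δ^[m+1] u)
            + ∑ m ∈ Finset.range (n+1), (Nat.choose n (m+1) : F) * δ^[n-m] c * δ^[m+1] u)
            + δ^[n+1] c * u := by
        rw [Finset.sum_range_succ']
        have h2 : ∀ m ∈ Finset.range (n+1),
            (Nat.choose (n+1) (m+1) : F) * δ^[n+1-(m+1)] c * δ^[m+1] u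
            = (Nat.choose n m : F) * δ^[n-m] c * δ^[m+1] u
              + (Nat.choose n (m+1) : F) * δ^[n-m] c * δ^[m+1] u := by
          intro m hm
          rw [Nat.succ_sub_succ, Nat.choose_succ_succ]
          push_cast; ring
        rw [Finset.sum_congr rfl h2, Finset.sum_add_distrib]
        simp
      have hS1 : ∑ m ∈ Finset.range (n+1), (Nat.choose n m : F) * δ^[n+1-m] c * δ^[m] u
          = (∑ m ∈ Finset.range (n+1), (Nat.choose n (m+1) : F) * δ^[n-m] c * δ^[m+1] u)
            + δ^[n+1] c * u := by
        rw [Finset.sum_range_succ' _ n, Finset.sum_range_succ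
          (fun m => (Nat.choose n (m+1) : F) * δ^[n-m] c * δ^[m+1] u) n]
        simp [Nat.succ_sub_succ, Nat.choose_succ_self]
      rw [hS1, hT]
      ring

end Basics

section Skew
variable {F : Type*} [Field F] (δ : F → F)
variable (hadd : ∀ a b : F, δ (a + b) = δ a + δ b)
variable (hmul : ∀ a b : F, δ (a * b) = a * δ b + δ a * b)

theorem finsupp_bound (g : ℕ →₀ F) : ∃ N : ℕ, ∀ n, N ≤ n → g n = 0 := by
  refine ⟨g.support.sup id + 1, fun n hn => ?_⟩
  by_contra h
  have : n ∈ g.support := Finsupp.mem_support_iff.mpr h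
  have := Finset.le_sup (f := id) this
  simp at this
  omega

theorem sum_shift (H : ℕ → F) (j N : ℕ) (hj : j ≤ N) :
    ∑ n ∈ Finset.range N, (if j ≤ n then H (n - j) else 0) = ∑ m ∈ Finset.range (N - j), H m := by
  rw [Finset.range_eq_Ico, ← Finset.sum_Ico_consecutive _ (Nat.zero_le j) hj]
  have h1 : ∑ n ∈ Finset.Ico 0 j, (if j ≤ n then H (n - j) else 0) = 0 := by
    apply Finset.sum_eq_zero
    intro n hn
    rw [Finset.mem_Ico] at hn
    rw [if_neg (by omega)]
  rw [h1, zero_add, Finset.sum_Ico_eq_sum_range]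
  apply Finset.sum_congr rfl
  intro m hm
  rw [if_pos (by omega)]
  congr 1
  omega

theorem sum_choose_ext (i M : ℕ) (hi : i < M) (G : ℕ → F) :
    ∑ m ∈ Finset.range M, (Nat.choose i m : F) * G m
      = ∑ m ∈ Finset.range (i+1), (Nat.choose i m : F) * G m := by
  symm
  apply Finset.sum_subset
  · exact Finset.range_subset_range.mpr (by omega)
  · intro m _ hm
    rw [Finset.mem_range] at hm
    rw [Nat.choose_eq_zero_of_lt (by omega), Nat.cast_zero, zero_mul]

include hadd in
theorem skewMul_eq_range (q f : ℕ →₀ F) (Nq Nf : ℕ)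
    (hq : ∀ i, Nq ≤ i → q i = 0) (hf : ∀ j, Nf ≤ j → f j = 0) (n : ℕ) :
    skewMul δ q f n = ∑ i ∈ Finset.range Nq, ∑ j ∈ Finset.range Nf,
      if j ≤ n then q i * (Nat.choose i (n - j) : F) * δ^[i - (n - j)] (f j) else 0 := by
  unfold skewMul
  rw [Finset.sum_subset (s₁ := q.support) (s₂ := Finset.range Nq)]
  · apply Finset.sum_congr rfl
    intro i _
    rw [Finset.sum_subset (s₁ := f.support) (s₂ := Finset.range Nf)]
    · intro j hj
      rw [Finset.mem_range]
      by_contra h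
      exact (Finsupp.mem_support_iff.mp hj) (hf j (by omega))
    · intro j _ hj
      have : f j = 0 := by
        by_contra h
        exact hj (Finsupp.mem_support_iff.mpr h)
      rw [this, del_iter_zero δ hadd]
      simp
  · intro i hi
    rw [Finset.mem_range]
    by_contra h
    exact (Finsupp.mem_support_iff.mp hi) (hq i (by omega))
  · intro i _ hi
    have : q i = 0 := by
      by_contra h
      exact hi (Finsupp.mem_support_iff.mpr h)
    apply Finset.sum_eq_zero
    intro j _
    split_ifs
    · rw [this, zero_mul, zero_mul]
    · rfl

include hadd in
theorem skewMul_bound (q f : ℕ →₀ F) (Nq Nf : ℕ)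
    (hq : ∀ i, Nq ≤ i → q i = 0) (hf : ∀ j, Nf ≤ j → f j = 0) (n : ℕ)
    (hn : Nq + Nf ≤ n + 1) : skewMul δ q f n = 0 := by
  rw [skewMul_eq_range δ hadd q f Nq Nf hq hf n]
  apply Finset.sum_eq_zero
  intro i hi
  apply Finset.sum_eq_zero
  intro j hj
  rw [Finset.mem_range] at hi hj
  split_ifs
  · rw [Nat.choose_eq_zero_of_lt (by omega), Nat.cast_zero, mul_zero, zero_mul]
  · rfl

include hadd in
theorem skewMul_add_left (q1 q2 f : ℕ →₀ F) (n : ℕ) :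
    skewMul δ (q1 + q2) f n = skewMul δ q1 f n + skewMul δ q2 f n := by
  obtain ⟨N1, h1⟩ := finsupp_bound q1
  obtain ⟨N2, h2⟩ := finsupp_bound q2
  obtain ⟨Nf, hf⟩ := finsupp_bound f
  have h12 : ∀ i, max N1 N2 ≤ i → (q1 + q2) i = 0 := by
    intro i hi
    rw [Finsupp.add_apply, h1 i (by omega), h2 i (by omega), add_zero]
  rw [skewMul_eq_range δ hadd _ f (max N1 N2) Nf h12 hf n,
    skewMul_eq_range δ hadd q1 f (max N1 N2) Nf (fun i hi => h1 i (by omega)) hf n,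
    skewMul_eq_range δ hadd q2 f (max N1 N2) Nf (fun i hi => h2 i (by omega)) hf n,
    ← Finset.sum_add_distrib]
  apply Finset.sum_congr rfl
  intro i _
  rw [← Finset.sum_add_distrib]
  apply Finset.sum_congr rfl
  intro j _
  rw [Finsupp.add_apply]
  split_ifs
  · ring
  · rw [add_zero]

include hadd hmul in
theorem ap_skewMul (q f : ℕ →₀ F) (Nq Nf N : ℕ)
    (hq : ∀ i, Nq ≤ i → q i = 0) (hf : ∀ j, Nf ≤ j → f j = 0)
    (hN : Nq + Nf ≤ N) (β : F) :
    ∑ n ∈ Finset.range N, skewMul δ q f n * δ^[n] β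
      = ∑ i ∈ Finset.range Nq, q i * δ^[i] (∑ j ∈ Finset.range Nf, f j * δ^[j] β) := by
  have key : ∀ n ∈ Finset.range N, skewMul δ q f n * δ^[n] β
      = ∑ i ∈ Finset.range Nq, ∑ j ∈ Finset.range Nf,
        (if j ≤ n then q i * (Nat.choose i (n - j) : F) * δ^[i - (n - j)] (f j) else 0)
          * δ^[n] β := by
    intro n _
    rw [skewMul_eq_range δ hadd q f Nq Nf hq hf n, Finset.sum_mul]
    apply Finset.sum_congr rfl
    intro i _
    rw [Finset.sum_mul]
  rw [Finset.sum_congr rfl key]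
  rw [Finset.sum_comm]
  apply Finset.sum_congr rfl
  intro i hi
  rw [Finset.mem_range] at hi
  rw [del_iter_sum δ hadd, Finset.mul_sum, Finset.sum_comm]
  apply Finset.sum_congr rfl
  intro j hj
  rw [Finset.mem_range] at hj
  -- LHS over n, RHS : q i * δ^[i] (f j * δ^[j] β)
  have e1 : ∀ n ∈ Finset.range N,
      (if j ≤ n then q i * (Nat.choose i (n - j) : F) * δ^[i - (n - j)] (f j) else 0) * δ^[n] β
      = if j ≤ n then q i * (Nat.choose i (n - j) : F) * δ^[i - (n - j)] (f j) * δ^[n - j + j] β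
        else 0 := by
    intro n _
    split_ifs with h
    · congr 3
      omega
    · rw [zero_mul]
  rw [Finset.sum_congr rfl e1,
    sum_shift (fun m => q i * (Nat.choose i m : F) * δ^[i - m] (f j) * δ^[m + j] β) j N (by omega)]
  have e2 : ∀ m, q i * (Nat.choose i m : F) * δ^[i - m] (f j) * δ^[m + j] β
      = (Nat.choose i m : F) * (q i * (δ^[i - m] (f j) * δ^[m + j] β)) := fun m => by ring
  simp only [e2]
  rw [sum_choose_ext (F := F) i (N - j) (by omega)]
  rw [del_iter_mul δ hadd hmul i (f j) (δ^[j] β), Finset.mul_sum]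
  apply Finset.sum_congr rfl
  intro m _
  rw [← Function.iterate_add_apply]
  ring
end Skew

section Eval
variable {F : Type*} [Field F] (δ : F → F)
variable (hadd : ∀ a b : F, δ (a + b) = δ a + δ b)
variable (hmul : ∀ a b : F, δ (a * b) = a * δ b + δ a * b)

include hmul in
theorem nrec_eq (β : F) (hβ : β ≠ 0) (i : ℕ) :
    Nrec δ (δ β / β) i = δ^[i] β / β := by
  induction i with
  | zero => simp [Nrec, div_self hβ]
  | succ k ih =>
      show Nrec δ (δ β / β) k * (δ β / β) + δ (Nrec δ (δ β / β) k) = δ^[k+1] β / β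
      rw [ih, div_eq_mul_inv (δ^[k] β) β, hmul, del_inv δ hmul β hβ,
        Function.iterate_succ_apply']
      field_simp
      ring

theorem ap_range (g : ℕ →₀ F) (β : F) (N : ℕ) (hN : ∀ n, N ≤ n → g n = 0) :
    ∑ i ∈ g.support, g i * δ^[i] β = ∑ i ∈ Finset.range N, g i * δ^[i] β := by
  apply Finset.sum_subset
  · intro i hi
    rw [Finset.mem_range]
    by_contra h
    exact (Finsupp.mem_support_iff.mp hi) (hN i (by omega))
  · intro i _ hi
    have : g i = 0 := by
      by_contra h
      exact hi (Finsupp.mem_support_iff.mpr h)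
    rw [this, zero_mul]

include hmul in
theorem eval_eq_ap (g : ℕ →₀ F) (β : F) (hβ : β ≠ 0) :
    ∑ i ∈ g.support, g i * Nrec δ (δ β / β) i
      = (∑ i ∈ g.support, g i * δ^[i] β) / β := by
  rw [Finset.sum_div]
  apply Finset.sum_congr rfl
  intro i _
  rw [nrec_eq δ hmul β hβ i, mul_div_assoc]

theorem lin_apply (a : F) (n : ℕ) :
    (Finsupp.single 1 1 - Finsupp.single 0 a : ℕ →₀ F) n
      = if n = 1 then 1 else if n = 0 then -a else 0 := by
  rcases n with _ | n
  · simp [Finsupp.single_apply]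
  · rcases n with _ | n
    · simp [Finsupp.single_apply]
    · simp [Finsupp.single_apply]

theorem lin_bound (a : F) : ∀ n, 2 ≤ n → (Finsupp.single 1 1 - Finsupp.single 0 a : ℕ →₀ F) n = 0 := by
  intro n hn
  rw [lin_apply, if_neg (by omega), if_neg (by omega)]

include hadd hmul in
theorem ap_lin (β : F) (hβ : β ≠ 0) :
    ∑ j ∈ Finset.range 2, (Finsupp.single 1 1 - Finsupp.single 0 (δ β / β) : ℕ →₀ F) j * δ^[j] β
      = 0 := by
  rw [Finset.sum_range_succ, Finset.sum_range_succ, Finset.sum_range_zero]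
  rw [lin_apply, lin_apply]
  norm_num
  field_simp
  ring

include hadd hmul in
theorem rdvd_ap_zero (g q : ℕ →₀ F) (β : F) (hβ : β ≠ 0)
    (hq : ∀ n : ℕ, g n = skewMul δ q
      (Finsupp.single 1 1 - Finsupp.single 0 (δ β / β)) n) (N : ℕ)
    (hN : ∀ n, N ≤ n → g n = 0) :
    ∑ i ∈ g.support, g i * δ^[i] β = 0 := by
  obtain ⟨Nq, hNq⟩ := finsupp_bound q
  set f := Finsupp.single 1 (1:F) - Finsupp.single 0 (δ β / β) with hf
  have hNbig : ∀ n, max N (Nq + 2) ≤ n → g n = 0 := fun n hn => hN n (by omega)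
  rw [ap_range δ g β (max N (Nq+2)) hNbig]
  have : ∀ n ∈ Finset.range (max N (Nq+2)), g n * δ^[n] β = skewMul δ q f n * δ^[n] β := by
    intro n _
    rw [hq n]
  rw [Finset.sum_congr rfl this,
    ap_skewMul δ hadd hmul q f Nq 2 (max N (Nq+2)) hNq (lin_bound _) (le_max_right _ _) β,
    ap_lin δ hadd hmul β hβ]
  apply Finset.sum_eq_zero
  intro i _
  rw [del_iter_zero δ hadd, mul_zero]

include hadd hmul in
theorem rdvd_eval_zero (g : ℕ →₀ F) (β : F) (hβ : β ≠ 0)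
    (h : RDvd δ (Finsupp.single 1 1 - Finsupp.single 0 (δ β / β)) g) :
    ∑ i ∈ g.support, g i * Nrec δ (δ β / β) i = 0 := by
  obtain ⟨q, hq⟩ := h
  obtain ⟨N, hN⟩ := finsupp_bound g
  rw [eval_eq_ap δ hmul g β hβ, rdvd_ap_zero δ hadd hmul g q β hβ hq N hN, zero_div]

theorem skewMul_zero_left (f : ℕ →₀ F) (n : ℕ) : skewMul δ (0 : ℕ →₀ F) f n = 0 := by
  unfold skewMul
  simp

include hadd in
theorem skewMul_single_top (c : F) (a : F) (D : ℕ) :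
    skewMul δ (Finsupp.single D c) (Finsupp.single 1 1 - Finsupp.single 0 a) (D + 1) = c := by
  have hq : ∀ i, D + 1 ≤ i → (Finsupp.single D c : ℕ →₀ F) i = 0 := by
    intro i hi
    rw [Finsupp.single_apply, if_neg (by omega)]
  rw [skewMul_eq_range δ hadd _ _ (D+1) 2 hq (lin_bound a) (D+1)]
  refine Eq.trans (Finset.sum_eq_single_of_mem D (by simp) ?_) ?_
  · intro i _ hi
    apply Finset.sum_eq_zero
    intro j _
    have hz : (Finsupp.single D c : ℕ →₀ F) i = 0 := by
      rw [Finsupp.single_apply, if_neg (fun h => hi h.symm)]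
    rw [hz]
    split_ifs
    · rw [zero_mul, zero_mul]
    · rfl
  · rw [Finset.sum_range_succ, Finset.sum_range_succ, Finset.sum_range_zero]
    simp [lin_apply, Finsupp.single_apply, Nat.choose_eq_zero_of_lt D.lt_succ_self]

include hadd in
theorem skewMul_single_bound (c : F) (a : F) (D : ℕ) :
    ∀ n, D + 2 ≤ n →
      skewMul δ (Finsupp.single D c) (Finsupp.single 1 1 - Finsupp.single 0 a) n = 0 := by
  intro n hn
  apply skewMul_bound δ hadd _ _ (D+1) 2
  · intro i hi
    rw [Finsupp.single_apply, if_neg (by omega)]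
  · exact lin_bound a
  · omega

include hadd in
theorem div_exists (a : F) : ∀ D : ℕ, ∀ g : ℕ → F, (∀ n, D ≤ n → g n = 0) →
    ∃ q : ℕ →₀ F, ∃ r : F, ∀ n,
      g n = skewMul δ q (Finsupp.single 1 1 - Finsupp.single 0 a) n
        + (if n = 0 then r else 0) := by
  intro D
  induction D with
  | zero =>
      intro g hg
      refine ⟨0, 0, fun n => ?_⟩
      rw [hg n (by omega), skewMul_zero_left]
      simp
  | succ D ih =>
      intro g hg
      match D, ih with
      | 0, _ =>
          refine ⟨0, g 0, fun n => ?_⟩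
          rw [skewMul_zero_left, zero_add]
          rcases Nat.eq_zero_or_pos n with h | h
          · subst h; simp
          · rw [if_neg (by omega), hg n (by omega)]
      | (D' + 1), ih =>
          set c := g (D' + 1) with hc
          set q1 := Finsupp.single D' c with hq1
          set f := Finsupp.single 1 (1:F) - Finsupp.single 0 a with hf
          have hb : ∀ n, D' + 1 ≤ n → g n - skewMul δ q1 f n = 0 := by
            intro n hn
            rcases Nat.lt_or_ge n (D' + 2) with h | h
            · have hn' : n = D' + 1 := by omega
              subst hn'
              rw [skewMul_single_top δ hadd, sub_self]
            · rw [hg n (by omega), skewMul_single_bound δ hadd c a D' n h, sub_zero]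
          obtain ⟨q2, r, hq2⟩ := ih (fun n => g n - skewMul δ q1 f n) hb
          refine ⟨q1 + q2, r, fun n => ?_⟩
          rw [skewMul_add_left δ hadd]
          have := hq2 n
          linear_combination this

include hadd hmul in
theorem eval_zero_rdvd (g : ℕ →₀ F) (β : F) (hβ : β ≠ 0)
    (h : ∑ i ∈ g.support, g i * Nrec δ (δ β / β) i = 0) :
    RDvd δ (Finsupp.single 1 1 - Finsupp.single 0 (δ β / β)) g := by
  obtain ⟨D, hD⟩ := finsupp_bound g
  obtain ⟨q, r, hq⟩ := div_exists δ hadd (δ β / β) D (fun n => g n) hD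
  obtain ⟨Nq, hNq⟩ := finsupp_bound q
  set f := Finsupp.single 1 (1:F) - Finsupp.single 0 (δ β / β) with hf
  -- show r = 0
  have key : ∑ n ∈ Finset.range (max D (Nq+2) + 1), g n * δ^[n] β
      = (∑ n ∈ Finset.range (max D (Nq+2) + 1), skewMul δ q f n * δ^[n] β) + r * β := by
    have e : ∀ n ∈ Finset.range (max D (Nq+2) + 1), g n * δ^[n] β
        = skewMul δ q f n * δ^[n] β + (if n = 0 then r else 0) * δ^[n] β := by
      intro n _
      rw [hq n, add_mul]
    rw [Finset.sum_congr rfl e, Finset.sum_add_distrib]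
    congr 1
    rw [Finset.sum_eq_single_of_mem 0 (by simp)]
    · simp
    · intro i _ hi
      rw [if_neg hi, zero_mul]
  have h1 : ∑ n ∈ Finset.range (max D (Nq+2) + 1), g n * δ^[n] β = 0 := by
    rw [← ap_range δ g β _ (fun n hn => hD n (by omega))]
    have := eval_eq_ap δ hmul g β hβ
    rw [h] at this
    field_simp at this
    rw [← this]
    exact zero_mul β
  have h2 : ∑ n ∈ Finset.range (max D (Nq+2) + 1), skewMul δ q f n * δ^[n] β = 0 := by
    rw [ap_skewMul δ hadd hmul q f Nq 2 (max D (Nq+2)+1) hNq (lin_bound _) (by omega) β,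
      ap_lin δ hadd hmul β hβ]
    apply Finset.sum_eq_zero
    intro i _
    rw [del_iter_zero δ hadd, mul_zero]
  rw [h1, h2, zero_add] at key
  have hr : r = 0 := by
    rcases mul_eq_zero.mp key.symm with h | h
    · exact h
    · exact absurd h hβ
  refine ⟨q, fun n => ?_⟩
  rw [hq n, hr]
  simp

include hadd in
theorem skew_lead (q lam : ℕ →₀ F) (dq dl : ℕ) (hq' : ∀ n, dq < n → q n = 0)
    (hl1 : lam dl = 1) (hl' : ∀ n, dl < n → lam n = 0) :
    skewMul δ q lam (dq + dl) = q dq := by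
  rw [skewMul_eq_range δ hadd q lam (dq+1) (dl+1)
    (fun i hi => hq' i (by omega)) (fun j hj => hl' j (by omega))]
  refine Eq.trans (Finset.sum_eq_single_of_mem dq (by simp) ?_) ?_
  · intro i hi hine
    rw [Finset.mem_range] at hi
    apply Finset.sum_eq_zero
    intro j hj
    rw [Finset.mem_range] at hj
    rw [if_pos (by omega), Nat.choose_eq_zero_of_lt (by omega)]
    push_cast
    rw [mul_zero, zero_mul]
  · refine Eq.trans (Finset.sum_eq_single_of_mem dl (by simp) ?_) ?_
    · intro j hj hjne
      rw [Finset.mem_range] at hj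
      rw [if_pos (by omega), Nat.choose_eq_zero_of_lt (by omega)]
      push_cast
      rw [mul_zero, zero_mul]
    · rw [if_pos (by omega)]
      have h3 : dq + dl - dl = dq := by omega
      rw [h3, Nat.choose_self, hl1]
      simp

end Eval

section Dep
variable {F : Type*} [Field F] (δ : F → F)
variable (hadd : ∀ a b : F, δ (a + b) = δ a + δ b)
variable (hmul : ∀ a b : F, δ (a * b) = a * δ b + δ a * b)

include hadd hmul in
theorem solutions_dependent : ∀ d : ℕ, ∀ c : ℕ → F, c d ≠ 0 → ∀ β : Fin (d+1) → F,
    (∀ i, ∑ m ∈ Finset.range (d+1), c m * δ^[m] (β i) = 0) →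
    ∃ a : Fin (d+1) → F, (∀ i, δ (a i) = 0) ∧ (∑ i, a i * β i = 0) ∧ ∃ i, a i ≠ 0 := by
  intro d
  induction d with
  | zero =>
      intro c hc β hsol
      have h0 : β 0 = 0 := by
        have := hsol 0
        rw [Finset.sum_range_one] at this
        simpa using (mul_eq_zero.mp this).resolve_left hc
      exact ⟨fun _ => 1, fun i => del_one δ hmul, by simp [h0, Fin.sum_univ_one],
        ⟨0, one_ne_zero⟩⟩
  | succ d ih =>
      intro c hc β hsol
      by_cases hβ0 : β 0 = 0
      · refine ⟨fun i => if i = 0 then 1 else 0, fun i => ?_, ?_, ⟨0, by simp⟩⟩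
        · dsimp only
          split_ifs
          · exact del_one δ hmul
          · exact del_zero δ hadd
        · simp [hβ0]
      · set b : ℕ → F := fun m => ∑ i ∈ Finset.range (d+2),
          c i * (Nat.choose i m : F) * δ^[i - m] (β 0) with hb
        have hb0 : b 0 = 0 := by
          rw [hb]
          simpa using hsol 0
        have hbtop : b (d+1) = c (d+1) * β 0 := by
          rw [hb]
          refine Eq.trans (Finset.sum_eq_single_of_mem (d+1) (by simp) ?_) ?_
          · intro i hi hine
            rw [Finset.mem_range] at hi
            rw [Nat.choose_eq_zero_of_lt (by omega)]
            push_cast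
            rw [mul_zero, zero_mul]
          · simp
        have key : ∀ u : F, ∑ m ∈ Finset.range (d+2), c m * δ^[m] (β 0 * u)
            = ∑ m ∈ Finset.range (d+2), b m * δ^[m] u := by
          intro u
          have e1 : ∀ m ∈ Finset.range (d+2), c m * δ^[m] (β 0 * u)
              = ∑ k ∈ Finset.range (d+2),
                c m * ((Nat.choose m k : F) * δ^[m - k] (β 0) * δ^[k] u) := by
            intro m hm
            rw [Finset.mem_range] at hm
            rw [del_iter_mul δ hadd hmul, Finset.mul_sum]
            apply Finset.sum_subset (Finset.range_subset_range.mpr (by omega))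
            intro k _ hk
            rw [Finset.mem_range] at hk
            rw [Nat.choose_eq_zero_of_lt (by omega)]
            push_cast
            rw [zero_mul, zero_mul, mul_zero]
          rw [Finset.sum_congr rfl e1, Finset.sum_comm]
          apply Finset.sum_congr rfl
          intro k _
          rw [hb, Finset.sum_mul]
          apply Finset.sum_congr rfl
          intro m _
          ring
        set uβ : Fin (d+1) → F := fun i => β i.succ / β 0 with huβ
        have hsol' : ∀ i, ∑ m ∈ Finset.range (d+1), b (m+1) * δ^[m] (δ (uβ i)) = 0 := by
          intro i
          have h1 : β 0 * uβ i = β i.succ := by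
            rw [huβ]
            field_simp
          have h2 : ∑ m ∈ Finset.range (d+2), b m * δ^[m] (uβ i) = 0 := by
            rw [← key, Finset.sum_congr rfl (fun m _ => by rw [h1])]
            exact hsol i.succ
          rw [Finset.sum_range_succ', hb0, zero_mul, add_zero] at h2
          rw [← h2]
          apply Finset.sum_congr rfl
          intro m _
          rw [Function.iterate_succ_apply]
        obtain ⟨a', ha'const, ha'sum, i0, hi0⟩ :=
          ih (fun m => b (m+1)) (show b (d+1) ≠ 0 by rw [hbtop]; exact mul_ne_zero hc hβ0) (fun i => δ (uβ i)) hsol'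
        set s : F := ∑ i, a' i * uβ i with hs
        have hδs : δ s = 0 := by
          rw [hs, del_sum δ hadd]
          rw [← ha'sum]
          apply Finset.sum_congr rfl
          intro i _
          rw [hmul, ha'const i, zero_mul, add_zero]
        refine ⟨Fin.cases (-s) a', fun i => ?_, ?_, ⟨i0.succ, by simpa using hi0⟩⟩
        · induction i using Fin.cases with
          | zero => simpa using (del_neg δ hadd s).trans (by rw [hδs, neg_zero])
          | succ j => simpa using ha'const j
        · rw [Fin.sum_univ_succ]
          simp only [Fin.cases_zero, Fin.cases_succ]
          have e2 : ∀ i : Fin (d+1), a' i * β i.succ = (a' i * uβ i) * β 0 := by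
            intro i
            rw [huβ]
            field_simp
          rw [Finset.sum_congr rfl (fun i _ => e2 i), ← Finset.sum_mul, ← hs]
          ring
end Dep

section Mult
variable {F : Type*} [Field F] (δ : F → F)
variable (hadd : ∀ a b : F, δ (a + b) = δ a + δ b)
variable (hmul : ∀ a b : F, δ (a * b) = a * δ b + δ a * b)

theorem ap_lin_gen (a y : F) :
    ∑ i ∈ Finset.range 2, (Finsupp.single 1 1 - Finsupp.single 0 a : ℕ →₀ F) i * δ^[i] y
      = δ y - a * y := by
  rw [Finset.sum_range_succ, Finset.sum_range_succ, Finset.sum_range_zero,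
    lin_apply, lin_apply]
  norm_num
  ring

theorem monic_bound {g : ℕ →₀ F} {d : ℕ} (hg : IsMonicOfDeg g d) :
    ∀ n, d + 1 ≤ n → g n = 0 := fun n hn => hg.2 n (by omega)

include hadd hmul in
theorem common_multiple : ∀ (v : ℕ) (β : Fin v → F), (∀ j, β j ≠ 0) →
    ∃ (h : ℕ →₀ F) (d : ℕ), d ≤ v ∧ IsMonicOfDeg h d ∧
      ∀ j, ∑ i ∈ h.support, h i * δ^[i] (β j) = 0 := by
  intro v
  induction v with
  | zero =>
      intro β hβ
      refine ⟨Finsupp.single 0 1, 0, le_refl 0, ⟨by simp, fun n hn => ?_⟩, fun j => j.elim0⟩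
      rw [Finsupp.single_apply, if_neg (by omega)]
  | succ v ih =>
      intro β hβ
      obtain ⟨h, d, hdv, hmon, hkill⟩ := ih (fun j => β j.castSucc) (fun j => hβ _)
      set γ := ∑ i ∈ h.support, h i * δ^[i] (β (Fin.last v)) with hγ
      by_cases hγ0 : γ = 0
      · refine ⟨h, d, by omega, hmon, fun j => ?_⟩
        induction j using Fin.lastCases with
        | last => exact hγ0
        | cast j => exact hkill j
      · set f := Finsupp.single 1 1 - Finsupp.single 0 (δ γ / γ) with hf
        have hfb : ∀ n, 2 ≤ n → f n = 0 := lin_bound _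
        have hhb : ∀ n, d + 1 ≤ n → h n = 0 := monic_bound hmon
        have hbig : ∀ n, d + 2 ≤ n → skewMul δ f h n = 0 := by
          intro n hn
          exact skewMul_bound δ hadd f h 2 (d+1) hfb hhb n (by omega)
        set h' : ℕ →₀ F := Finsupp.onFinset (Finset.range (d+2))
          (fun n => skewMul δ f h n)
          (by
            intro n hn
            rw [Finset.mem_range]
            by_contra hc
            exact hn (hbig n (by omega))) with hh'
        have h'app : ∀ n, h' n = skewMul δ f h n := fun n => rfl
        have h'top : h' (d+1) = 1 := by
          rw [h'app]
          have := skew_lead δ hadd f h 1 d (fun n hn => hfb n (by omega)) hmon.1 hmon.2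
          rw [add_comm] at this
          rw [this, hf, lin_apply]
          norm_num
        have h'bound : ∀ n, d + 1 < n → h' n = 0 := by
          intro n hn
          rw [h'app]
          exact hbig n (by omega)
        have h'ap : ∀ x : F, ∑ i ∈ h'.support, h' i * δ^[i] x
            = δ (∑ i ∈ h.support, h i * δ^[i] x)
              - (δ γ / γ) * (∑ i ∈ h.support, h i * δ^[i] x) := by
          intro x
          rw [ap_range δ h' x (d+3) (fun n hn => h'bound n (by omega))]
          have e : ∀ n ∈ Finset.range (d+3), h' n * δ^[n] x = skewMul δ f h n * δ^[n] x := by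
            intro n _
            rw [h'app]
          rw [Finset.sum_congr rfl e,
            ap_skewMul δ hadd hmul f h 2 (d+1) (d+3) hfb hhb (by omega) x,
            ap_lin_gen δ, ap_range δ h x (d+1) hhb]
        refine ⟨h', d+1, by omega, ⟨h'top, h'bound⟩, fun j => ?_⟩
        induction j using Fin.lastCases with
        | last =>
            rw [h'ap, ← hγ]
            field_simp
            ring
        | cast j =>
            rw [h'ap, hkill j, del_zero δ hadd, mul_zero, sub_zero]

theorem finsupp_top {g : ℕ →₀ F} (hg : g ≠ 0) :
    ∃ dg, g dg ≠ 0 ∧ ∀ n, dg < n → g n = 0 := by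
  have hne : g.support.Nonempty := Finsupp.support_nonempty_iff.mpr hg
  refine ⟨g.support.max' hne, Finsupp.mem_support_iff.mp (g.support.max'_mem hne), ?_⟩
  intro n hn
  by_contra hc
  have := Finset.le_max' g.support n (Finsupp.mem_support_iff.mpr hc)
  omega

include hadd in
theorem deg_le_of_rdvd (lam h : ℕ →₀ F) (dl d : ℕ)
    (hm : IsMonicOfDeg lam dl) (hh : IsMonicOfDeg h d) (hd : RDvd δ lam h) : dl ≤ d := by
  obtain ⟨q, hq⟩ := hd
  by_cases hq0 : q = 0
  · exfalso
    have := hq d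
    rw [hq0, skewMul_zero_left, hh.1] at this
    exact one_ne_zero this
  · obtain ⟨dq, hdq1, hdq2⟩ := finsupp_top (F := F) hq0
    have := hq (dq + dl)
    rw [skew_lead δ hadd q lam dq dl hdq2 hm.1 hm.2] at this
    by_contra hc
    rw [hh.2 (dq + dl) (by omega)] at this
    exact hdq1 this.symm
end Mult

/-- A position `t` is an error position (`t ∈ {k_1, …, k_v}`) if and only if
`L(δ^t(α))` is a right root of the error locator polynomial
`λ = [x − L(δ^{k_1}(α)), …, x − L(δ^{k_v}(α))]_ℓ`, i.e. the right evaluation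
`λ[L(δ^t(α))] = ∑_i λ_i N_i(L(δ^t(α)))` vanishes. -/
theorem error_locator_roots (Fq : Type*) [Field Fq] [Fintype Fq]
    (p : ℕ) [Fact p.Prime] [CharP Fq p]
    (δ : RatFunc Fq → RatFunc Fq)
    (hadd : ∀ a b : RatFunc Fq, δ (a + b) = δ a + δ b)
    (hmul : ∀ a b : RatFunc Fq, δ (a * b) = a * δ b + δ a * b)
    (hδ : δ ≠ 0)
    (α : RatFunc Fq)
    (hli : ∀ a : Fin p → RatFunc Fq, (∀ i, δ (a i) = 0) →
      ∑ i, a i * δ^[(i : ℕ)] α = 0 → ∀ i, a i = 0)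
    (hspan : ∀ f : RatFunc Fq, ∃ a : Fin p → RatFunc Fq,
      (∀ i, δ (a i) = 0) ∧ f = ∑ i, a i * δ^[(i : ℕ)] α)
    (v : ℕ) (hv : v ≤ p - 1) (k : Fin v → Fin p) (hk : Function.Injective k)
    -- `lam` is the error locator polynomial: the monic least left common multiple
    -- of the `x − L(δ^{k_j}(α))`
    (lam : ℕ →₀ RatFunc Fq)
    (hmonic : ∃ dl : ℕ, IsMonicOfDeg lam dl)
    (hdvd : ∀ j : Fin v,
      RDvd δ (Finsupp.single 1 1
        - Finsupp.single 0 (δ (δ^[(k j : ℕ)] α) / δ^[(k j : ℕ)] α)) lam)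
    (hgen : ∀ h : ℕ →₀ RatFunc Fq,
      (∀ j : Fin v, RDvd δ (Finsupp.single 1 1
        - Finsupp.single 0 (δ (δ^[(k j : ℕ)] α) / δ^[(k j : ℕ)] α)) h) →
      RDvd δ lam h) :
    ∀ t : Fin p,
      (∃ j, k j = t) ↔
        ∑ i ∈ lam.support,
          lam i * Nrec δ (δ (δ^[(t : ℕ)] α) / δ^[(t : ℕ)] α) i = 0 := by
  have hne : ∀ t : Fin p, δ^[(t : ℕ)] α ≠ 0 := by
    intro t h0
    have h1 := hli (fun i => if i = t then 1 else 0)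
      (fun i => by split_ifs; exacts [del_one δ hmul, del_zero δ hadd])
      (by simp [h0])
    have := h1 t
    simp at this
  intro t
  constructor
  · rintro ⟨j, rfl⟩
    exact rdvd_eval_zero δ hadd hmul lam (δ^[(k j : ℕ)] α) (hne _) (hdvd j)
  · intro heval
    by_contra hnot
    -- Ap lam at t vanishes
    have hApt : ∑ i ∈ lam.support, lam i * δ^[i] (δ^[(t : ℕ)] α) = 0 := by
      have h1 := eval_eq_ap δ hmul lam (δ^[(t : ℕ)] α) (hne t)
      rw [heval] at h1
      rcases div_eq_zero_iff.mp h1.symm with h | h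
      · exact h
      · exact absurd h (hne t)
    have hApk : ∀ j : Fin v, ∑ i ∈ lam.support, lam i * δ^[i] (δ^[(k j : ℕ)] α) = 0 := by
      intro j
      obtain ⟨q, hq⟩ := hdvd j
      obtain ⟨N, hN⟩ := finsupp_bound lam
      exact rdvd_ap_zero δ hadd hmul lam q (δ^[(k j : ℕ)] α) (hne _) hq N hN
    obtain ⟨dl, hmon⟩ := hmonic
    -- dl ≤ v
    obtain ⟨h, d, hdv, hmonh, hkill⟩ := common_multiple δ hadd hmul v
      (fun j => δ^[(k j : ℕ)] α) (fun j => hne _)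
    have hdlv : dl ≤ v := by
      have hdvd' : ∀ j : Fin v, RDvd δ (Finsupp.single 1 1
          - Finsupp.single 0 (δ (δ^[(k j : ℕ)] α) / δ^[(k j : ℕ)] α)) h := by
        intro j
        apply eval_zero_rdvd δ hadd hmul h (δ^[(k j : ℕ)] α) (hne _)
        rw [eval_eq_ap δ hmul h (δ^[(k j : ℕ)] α) (hne _), hkill j, zero_div]
      exact le_trans (deg_le_of_rdvd δ hadd lam h dl d hmon hmonh (hgen h hdvd')) hdv
    -- the dl+1 positions
    set m : Fin (dl+1) → Fin p := fun i =>
      if h0 : (i : ℕ) = 0 then t else k ⟨(i : ℕ) - 1, by omega⟩ with hm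
    have hminj : Function.Injective m := by
      intro i i' hii
      rw [hm] at hii
      dsimp only at hii
      split_ifs at hii with h1 h2 h2
      · exact Fin.ext (by omega)
      · exact absurd ⟨_, hii.symm⟩ hnot
      · exact absurd ⟨_, hii⟩ hnot
      · have := hk (Fin.ext (congrArg Fin.val hii) : _)
        have := congrArg Fin.val this
        simp at this
        exact Fin.ext (by omega)
    have hsols : ∀ i : Fin (dl+1),
        ∑ n ∈ Finset.range (dl+1), lam n * δ^[n] (δ^[(m i : ℕ)] α) = 0 := by
      intro i
      rw [← ap_range δ lam _ (dl+1) (monic_bound hmon)]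
      rw [hm]
      dsimp only
      split_ifs
      · exact hApt
      · exact hApk _
    obtain ⟨a, haconst, hasum, i0, hi0⟩ := solutions_dependent δ hadd hmul dl
      (fun n => lam n) (show lam dl ≠ 0 by rw [hmon.1]; exact one_ne_zero)
      (fun i => δ^[(m i : ℕ)] α) hsols
    set A : Fin p → RatFunc Fq := fun s => ∑ i : Fin (dl+1), if m i = s then a i else 0
      with hA
    have hAconst : ∀ s, δ (A s) = 0 := by
      intro s
      rw [hA]
      dsimp only
      rw [del_sum δ hadd]
      apply Finset.sum_eq_zero
      intro i _
      split_ifs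
      · exact haconst i
      · exact del_zero δ hadd
    have hAsum : ∑ s, A s * δ^[(s : ℕ)] α = 0 := by
      rw [hA]
      dsimp only
      have e : ∀ s : Fin p, (∑ i : Fin (dl+1), if m i = s then a i else 0) * δ^[(s : ℕ)] α
          = ∑ i : Fin (dl+1), if m i = s then a i * δ^[(s : ℕ)] α else 0 := by
        intro s
        rw [Finset.sum_mul]
        apply Finset.sum_congr rfl
        intro i _
        split_ifs
        · rfl
        · rw [zero_mul]
      rw [Finset.sum_congr rfl (fun s _ => e s), Finset.sum_comm]
      refine Eq.trans (Finset.sum_congr rfl fun i _ => ?_) hasum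
      have e2 : ∀ s : Fin p, (if m i = s then a i * δ^[(s : ℕ)] α else 0)
          = if m i = s then a i * δ^[(m i : ℕ)] α else 0 := by
        intro s
        split_ifs with h1
        · rw [h1]
        · rfl
      rw [Finset.sum_congr rfl (fun s _ => e2 s), Finset.sum_ite_eq]
      simp
    have hall := hli A hAconst hAsum
    have hAmi0 : A (m i0) = a i0 := by
      rw [hA]
      dsimp only
      rw [Finset.sum_eq_single i0]
      · rw [if_pos rfl]
      · intro i _ hine
        rw [if_neg (fun hc => hine (hminj hc))]
      · intro habs
        exact absurd (Finset.mem_univ i0) habs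
    rw [hall (m i0)] at hAmi0
    exact hi0 hAmi0.symm
end
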